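/- Main counting theorem: let f₁, ..., f_n : ℝ → ℝ be convex and u₁, ..., u_n ∈ ℝ, and define the branch functions b_t(μ) = u_t + ∑_{j=t+1}^{n} f_j(μ) for t = 1, ..., n and B(μ) = min_t b_t(μ). Then ℝ can be partitioned into at most 2n - 1 intervals such that on each interval B coincides with a single branch b_t. Equivalently, the order of B is at most 2·rank(B) − 1. -/

import Mathlib

open List

/-- Between two equal letters of `w`, only `≤`-smaller letters occur. -/
def Spaced (w : List ℕ) : Prop := ∀ a b c : ℕ, [a, b, c] <+ w → a = c → b ≤ a

lemma Spaced.sublist {w v : List ℕ} (hw : Spaced w) (h : v <+ w) : Spaced v :=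
  fun a b c hs he => hw a b c (hs.trans h) he

lemma exists_aba {w : List ℕ} {a : ℕ} (hc : w.IsChain (· ≠ ·)) (h : [a, a] <+ w) :
    ∃ b, b ≠ a ∧ [a, b, a] <+ w := by
  induction w with
  | nil => simp at h
  | cons x t ih =>
    cases h with
    | cons _ h' =>
      obtain ⟨b, hb, hs⟩ := ih hc.tail h'
      exact ⟨b, hb, hs.cons x⟩
    | cons_cons _ h' =>
      obtain ⟨y, t', rfl⟩ : ∃ y t', t = y :: t' := by
        cases t with
        | nil => simp at h'
        | cons y t' => exact ⟨y, t', rfl⟩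
      have hay : a ≠ y := (List.isChain_cons_cons.mp hc).1
      have hat' : a ∈ t' := by
        have hmem : a ∈ y :: t' := h'.subset (by simp)
        rcases List.mem_cons.mp hmem with h | h
        · exact absurd h hay
        · exact h
      exact ⟨y, Ne.symm hay,
        ((List.singleton_sublist.mpr hat').cons₂ y).cons₂ a⟩

lemma L1 : ∀ N (w : List ℕ), w.length ≤ N → w.IsChain (· ≠ ·) → Spaced w →
    w.length ≤ 2 * w.toFinset.card - 1 := by
  intro N
  induction N with
  | zero =>
    intro w hw _ _
    omega
  | succ N ih =>
    intro w hlen hc hsp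
    rcases eq_or_ne w [] with rfl | hne
    · simp
    have hfs : w.toFinset.Nonempty := by
      obtain ⟨x, hx⟩ := List.exists_mem_of_ne_nil w hne
      exact ⟨x, List.mem_toFinset.mpr hx⟩
    set c := w.toFinset.card with hcdef
    have hc1 : 1 ≤ c := Finset.card_pos.mpr hfs
    set m := w.toFinset.min' hfs with hmdef
    have hm_mem : m ∈ w := List.mem_toFinset.mp (w.toFinset.min'_mem hfs)
    have hm_min : ∀ b ∈ w, m ≤ b := fun b hb =>
      w.toFinset.min'_le b (List.mem_toFinset.mpr hb)
    have hnotdup : ¬ [m, m] <+ w := by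
      intro hdup
      obtain ⟨b, hb, hs⟩ := exists_aba hc hdup
      have h1 : b ≤ m := hsp m b m hs rfl
      have h2 : m ≤ b := hm_min b (hs.subset (by simp))
      exact hb (le_antisymm h1 h2)
    obtain ⟨xs, ys, hw⟩ := List.append_of_mem hm_mem
    have hmxs : m ∉ xs := by
      intro h
      exact hnotdup (hw ▸ ((List.singleton_sublist.mpr h).append
        (by simp : [m] <+ m :: ys)))
    have hmys : m ∉ ys := by
      intro h
      refine hnotdup (hw ▸ ?_)
      have : [m, m] <+ m :: ys := (List.singleton_sublist.mpr h).cons₂ m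
      exact this.trans (List.sublist_append_right xs (m :: ys))
    have hcw : (xs ++ m :: ys).IsChain (· ≠ ·) := hw ▸ hc
    obtain ⟨hcxs, hcmys, hjunc⟩ := List.isChain_append.mp hcw
    have hcys : ys.IsChain (· ≠ ·) := hcmys.tail
    -- key: bound for a candidate replacement list
    have key : ∀ v : List ℕ, v <+ xs ++ m :: ys → v.IsChain (· ≠ ·) → m ∉ v →
        v.length ≤ 2 * (c - 1) - 1 := by
      intro v hv hcv hmv
      have hvw : v <+ w := hw ▸ hv
      have hvne : v ≠ w := by
        intro h; exact hmv (h ▸ hm_mem)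
      have hvlt : v.length < w.length := by
        rcases lt_or_eq_of_le hvw.length_le with h | h
        · exact h
        · exact absurd (hvw.eq_of_length h) hvne
      have hsub : v.toFinset ⊆ w.toFinset.erase m := by
        intro b hb
        rw [List.mem_toFinset] at hb
        exact Finset.mem_erase.mpr ⟨fun h => hmv (h ▸ hb), List.mem_toFinset.mpr (hvw.subset hb)⟩
      have hcard : v.toFinset.card ≤ c - 1 := by
        calc v.toFinset.card ≤ (w.toFinset.erase m).card := Finset.card_le_card hsub
        _ = c - 1 := by rw [Finset.card_erase_of_mem (w.toFinset.min'_mem hfs)]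
      have := ih v (by omega) hcv (hsp.sublist hvw)
      omega
    have hlenw : w.length = xs.length + ys.length + 1 := by
      rw [hw]; simp; omega
    by_cases hys : ys = []
    · subst hys
      have := key xs (by simp) hcxs hmxs
      simp at hlenw
      omega
    by_cases hxs : xs = []
    · subst hxs
      have := key ys (by
        simpa using (List.sublist_cons_self m ys)) hcys hmys
      simp at hlenw
      omega
    obtain ⟨y, ys', rfl⟩ : ∃ y ys', ys = y :: ys' := by
      cases ys with
      | nil => exact absurd rfl hys
      | cons y ys' => exact ⟨y, ys', rfl⟩
    have hymem : y ∈ w := by rw [hw]; simp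
    have hym : y ≠ m := fun h => hmys (by simp [h])
    have hc2 : 2 ≤ c := by
      have hsub2 : ({m, y} : Finset ℕ) ⊆ w.toFinset := by
        intro b hb
        rcases Finset.mem_insert.mp hb with rfl | hb
        · exact List.mem_toFinset.mpr hm_mem
        · rw [Finset.mem_singleton] at hb; subst hb
          exact List.mem_toFinset.mpr hymem
      calc 2 = ({m, y} : Finset ℕ).card := (Finset.card_pair (Ne.symm hym)).symm
      _ ≤ c := Finset.card_le_card hsub2
    by_cases hbe : xs.getLast hxs = y
    · -- merge case : v = xs ++ ys'
      have hchain : (xs ++ ys').IsChain (· ≠ ·) := by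
        apply List.IsChain.append hcxs hcys.tail
        intro p hp q hq
        rw [List.getLast?_eq_getLast hxs, Option.mem_some_iff] at hp
        subst hp
        rw [hbe]
        exact (List.isChain_cons.mp hcys).1 q hq
      have hsubl : xs ++ ys' <+ xs ++ m :: y :: ys' := by
        apply List.Sublist.append_left
        exact (List.sublist_cons_self y ys').trans (List.sublist_cons_self m (y :: ys'))
      have hmv : m ∉ xs ++ ys' := by
        intro h
        rcases List.mem_append.mp h with h | h
        · exact hmxs h
        · exact hmys (by simp [h])
      have := key _ hsubl hchain hmv
      have hlv : (xs ++ ys').length = xs.length + ys'.length := by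
        simp only [List.length_append]
      simp at hlenw
      omega
    · -- no merge : v = xs ++ y :: ys'
      have hchain : (xs ++ y :: ys').IsChain (· ≠ ·) := by
        apply List.IsChain.append hcxs hcys
        intro p hp q hq
        rw [List.getLast?_eq_getLast hxs, Option.mem_some_iff] at hp
        subst hp
        simp only [List.head?_cons, Option.mem_some_iff] at hq
        subst hq
        exact hbe
      have hsubl : xs ++ y :: ys' <+ xs ++ m :: y :: ys' :=
        List.Sublist.append_left (List.sublist_cons_self m (y :: ys')) xs
      have hmv : m ∉ xs ++ y :: ys' := by
        intro h
        rcases List.mem_append.mp h with h | h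
        · exact hmxs h
        · exact hmys h
      have := key _ hsubl hchain hmv
      have hlv : (xs ++ y :: ys').length = xs.length + ys'.length + 1 := by
        simp only [List.length_append, List.length_cons]
        omega
      simp at hlenw
      omega

/-- Branch function `b_t(μ) = u_t + ∑_{j=t+1}^{n} f_j(μ)` of a `𝓑_n` function. -/
noncomputable def branch (n : ℕ) (u : ℕ → ℝ) (f : ℕ → ℝ → ℝ) (t : ℕ) (μ : ℝ) : ℝ :=
  u t + ∑ j ∈ Finset.Ioc t n, f j μ

/-- `t` is an optimal branch index at `μ`. -/
def isOpt (n : ℕ) (u : ℕ → ℝ) (f : ℕ → ℝ → ℝ) (t : ℕ) (μ : ℝ) : Prop :=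
  t ∈ Finset.Icc 1 n ∧ ∀ s ∈ Finset.Icc 1 n, branch n u f t μ ≤ branch n u f s μ

/-- The least optimal branch index at `μ`. -/
noncomputable def sel (n : ℕ) (u : ℕ → ℝ) (f : ℕ → ℝ → ℝ) (μ : ℝ) : ℕ :=
  sInf {t | isOpt n u f t μ}

lemma opt_exists (n : ℕ) (u : ℕ → ℝ) (f : ℕ → ℝ → ℝ) (hn : 1 ≤ n) (μ : ℝ) :
    ∃ t, isOpt n u f t μ := by
  obtain ⟨t, ht, hmin⟩ := Finset.exists_min_image (Finset.Icc 1 n)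
    (fun t => branch n u f t μ) ⟨1, Finset.mem_Icc.mpr ⟨le_refl 1, hn⟩⟩
  exact ⟨t, ht, hmin⟩

lemma sel_opt (n : ℕ) (u : ℕ → ℝ) (f : ℕ → ℝ → ℝ) (hn : 1 ≤ n) (μ : ℝ) :
    isOpt n u f (sel n u f μ) μ :=
  Nat.sInf_mem (opt_exists n u f hn μ)

lemma sel_le (n : ℕ) (u : ℕ → ℝ) (f : ℕ → ℝ → ℝ) {t : ℕ} {μ : ℝ}
    (h : isOpt n u f t μ) : sel n u f μ ≤ t :=
  Nat.sInf_le h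

lemma convexOn_finsum (f : ℕ → ℝ → ℝ) (hconv : ∀ j, ConvexOn ℝ Set.univ (f j))
    (F : Finset ℕ) : ConvexOn ℝ Set.univ fun μ => ∑ j ∈ F, f j μ := by
  classical
  induction F using Finset.induction_on with
  | empty => simpa using convexOn_const (0 : ℝ) convex_univ
  | insert _ _ hx ih =>
    simp only [Finset.sum_insert hx]
    exact (hconv _).add ih

lemma convexOn_branch_sub (n : ℕ) (u : ℕ → ℝ) (f : ℕ → ℝ → ℝ)
    (hconv : ∀ j, ConvexOn ℝ Set.univ (f j)) {s t : ℕ} (hst : s ≤ t) (htn : t ≤ n) :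
    ConvexOn ℝ Set.univ (fun μ => branch n u f s μ - branch n u f t μ) := by
  have heq : (fun μ => branch n u f s μ - branch n u f t μ)
      = fun μ => (u s - u t) + ∑ j ∈ Finset.Ioc s t, f j μ := by
    funext μ
    have hdisj : Disjoint (Finset.Ioc s t) (Finset.Ioc t n) := by
      rw [Finset.disjoint_left]
      intro a ha hb
      rw [Finset.mem_Ioc] at ha hb
      omega
    have hsplit : ∑ j ∈ Finset.Ioc s n, f j μ
        = ∑ j ∈ Finset.Ioc s t, f j μ + ∑ j ∈ Finset.Ioc t n, f j μ := by
      rw [← Finset.sum_union hdisj, Finset.Ioc_union_Ioc_eq_Ioc hst htn]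
    simp only [branch, hsplit]
    ring
  rw [heq]
  exact (convexOn_const _ convex_univ).add (convexOn_finsum f hconv _)

lemma branch_cross (n : ℕ) (u : ℕ → ℝ) (f : ℕ → ℝ → ℝ)
    (hconv : ∀ j, ConvexOn ℝ Set.univ (f j)) {s t : ℕ} (hst : s ≤ t) (htn : t ≤ n)
    {μ1 μ2 μ3 : ℝ} (h12 : μ1 ≤ μ2) (h23 : μ2 ≤ μ3)
    (H1 : branch n u f s μ1 ≤ branch n u f t μ1)
    (H3 : branch n u f s μ3 ≤ branch n u f t μ3) :
    branch n u f s μ2 ≤ branch n u f t μ2 := by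
  have hd := convexOn_branch_sub n u f hconv hst htn
  have h2 := hd.le_on_segment (Set.mem_univ μ1) (Set.mem_univ μ3)
    (by rw [segment_eq_Icc (h12.trans h23)]; exact ⟨h12, h23⟩)
  have hm := max_le (sub_nonpos.mpr H1) (sub_nonpos.mpr H3)
  have := le_trans h2 hm
  linarith

lemma sel_between (n : ℕ) (u : ℕ → ℝ) (f : ℕ → ℝ → ℝ) (hn : 1 ≤ n)
    (hconv : ∀ j, ConvexOn ℝ Set.univ (f j)) {μ1 μ2 μ3 : ℝ}
    (h12 : μ1 ≤ μ2) (h23 : μ2 ≤ μ3) (he : sel n u f μ1 = sel n u f μ3) :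
    sel n u f μ2 ≤ sel n u f μ1 := by
  have hs1 := sel_opt n u f hn μ1
  have hs3 := sel_opt n u f hn μ3
  rw [← he] at hs3
  have ht := sel_opt n u f hn μ2
  rcases le_or_gt (sel n u f μ2) (sel n u f μ1) with h | h
  · exact h
  have hsS := hs1.1
  have htS := ht.1
  have htn : sel n u f μ2 ≤ n := (Finset.mem_Icc.mp htS).2
  have hK := branch_cross n u f hconv (le_of_lt h) htn h12 h23
    (hs1.2 _ htS) (hs3.2 _ htS)
  exact sel_le n u f ⟨hsS, fun r hr => le_trans hK (ht.2 r hr)⟩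

/-- A chain of points with pairwise-distinct consecutive selector values. -/
def IsChainF (n : ℕ) (u : ℕ → ℝ) (f : ℕ → ℝ → ℝ) (k : ℕ) (ι : ℕ → ℝ) : Prop :=
  (∀ i j, i < j → j < k → ι i < ι j) ∧
    ∀ i, i + 1 < k → sel n u f (ι i) ≠ sel n u f (ι (i + 1))

lemma chainF_length (n : ℕ) (u : ℕ → ℝ) (f : ℕ → ℝ → ℝ) (hn : 1 ≤ n)
    (hconv : ∀ j, ConvexOn ℝ Set.univ (f j)) {k : ℕ} {ι : ℕ → ℝ}
    (h : IsChainF n u f k ι) : k ≤ 2 * n - 1 := by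
  set g : ℕ → ℕ := fun i => sel n u f (ι i) with hg
  set w : List ℕ := (List.range k).map g with hwdef
  have hlen : w.length = k := by simp [hwdef]
  have hget : ∀ (i : ℕ) (hi : i < w.length), w.get ⟨i, hi⟩ = g i := by
    intro i hi
    simp [hwdef]
  have hchain : w.IsChain (· ≠ ·) := by
    rw [List.isChain_iff_getElem]
    intro i hi
    have e1 := hget i (by omega)
    have e2 := hget (i + 1) hi
    simp only [List.get_eq_getElem] at e1 e2
    rw [e1, e2]
    exact h.2 i (by omega)
  have hsp : Spaced w := by
    intro a b c hs he
    rw [List.sublist_map_iff] at hs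
    obtain ⟨l', hl', hmap⟩ := hs
    obtain ⟨i, j, l, rfl⟩ : ∃ i j l, l' = [i, j, l] := by
      have hl3 : l'.length = 3 := by
        have := congrArg List.length hmap
        simpa using this.symm
      match l', hl3 with
      | [i, j, l], _ => exact ⟨i, j, l, rfl⟩
    simp only [List.map_cons, List.map_nil, List.cons.injEq, and_true] at hmap
    obtain ⟨ha, hb, hcc⟩ := hmap
    have hpw : List.Pairwise (· < ·) [i, j, l] :=
      (List.pairwise_lt_range (n := k)).sublist hl'
    simp only [List.pairwise_cons, List.mem_cons, List.mem_singleton] at hpw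
    have hij : i < j := hpw.1 j (Or.inl rfl)
    have hjl : j < l := hpw.2.1 l (Or.inl rfl)
    have hlk : l < k := List.mem_range.mp (hl'.subset (by simp))
    have h1 : ι i ≤ ι j := le_of_lt (h.1 i j hij (by omega))
    have h2 : ι j ≤ ι l := le_of_lt (h.1 j l hjl hlk)
    have heq : sel n u f (ι i) = sel n u f (ι l) := by
      show g i = g l
      rw [← ha, ← hcc]; exact he
    have := sel_between n u f hn hconv h1 h2 heq
    rw [ha, hb]
    exact this
  have hw := L1 w.length w le_rfl hchain hsp
  have hsub : w.toFinset ⊆ Finset.Icc 1 n := by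
    intro x hx
    rw [List.mem_toFinset, hwdef, List.mem_map] at hx
    obtain ⟨i, _, rfl⟩ := hx
    exact (sel_opt n u f hn (ι i)).1
  have hcard : w.toFinset.card ≤ n := by
    have := Finset.card_le_card hsub
    simpa using this
  omega

/-- Every `B ∈ 𝓑_n` (a pointwise minimum of `n` telescoping branches with convex
increments) admits a finite partition of `ℝ` into intervals on each of which `B`
coincides with a single branch, with at most `2n - 1` pieces. -/
theorem order_le_two_rank_sub_one (n : ℕ) (hn : 1 ≤ n) (u : ℕ → ℝ) (f : ℕ → ℝ → ℝ)
    (hconv : ∀ j : ℕ, ConvexOn ℝ Set.univ (f j)) :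
    ∃ P : Finset (Set ℝ), P.card ≤ 2 * n - 1 ∧
      (∀ I ∈ P, Convex ℝ I) ∧
      ((↑P : Set (Set ℝ)).PairwiseDisjoint id) ∧
      ⋃₀ (↑P : Set (Set ℝ)) = Set.univ ∧
      ∀ I ∈ P, ∃ t : ℕ, 1 ≤ t ∧ t ≤ n ∧ ∀ μ ∈ I,
        sInf {x : ℝ | ∃ s : ℕ, 1 ≤ s ∧ s ≤ n ∧ x = branch n u f s μ} =
          branch n u f t μ := by
  classical
  -- a maximal chain
  obtain ⟨k, ι, hι, hk1, hkmax⟩ :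
      ∃ k ι, IsChainF n u f k ι ∧ 1 ≤ k ∧ ∀ k' ι', IsChainF n u f k' ι' → k' ≤ k := by
    have hbdd : BddAbove {k | ∃ ι, IsChainF n u f k ι} := ⟨2 * n - 1, by
      rintro k ⟨ι, hι⟩
      exact chainF_length n u f hn hconv hι⟩
    have h1 : 1 ∈ {k | ∃ ι, IsChainF n u f k ι} :=
      ⟨fun _ => 0, fun i j hij hj => absurd hj (by omega),
        fun i hi => absurd hi (by omega)⟩
    obtain ⟨ι, hι⟩ := Nat.sSup_mem ⟨1, h1⟩ hbdd
    exact ⟨_, ι, hι, le_csSup hbdd h1, fun k' ι' h => le_csSup hbdd ⟨ι', h⟩⟩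
  have hmono : ∀ p q, p ≤ q → q < k → ι p ≤ ι q := by
    intro p q hpq hq
    rcases eq_or_lt_of_le hpq with rfl | h
    · exact le_refl _
    · exact le_of_lt (hι.1 p q h hq)
  have hkb : k ≤ 2 * n - 1 := chainF_length n u f hn hconv hι
  -- the pieces
  set I : ℕ → Set ℝ := fun i =>
    {μ | sel n u f μ = sel n u f (ι i) ∧ (i = 0 ∨ ι (i - 1) < μ) ∧
      (i = k - 1 ∨ μ < ι (i + 1))} with hI
  have hmemI : ∀ i μ, μ ∈ I i ↔ (sel n u f μ = sel n u f (ι i) ∧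
      (i = 0 ∨ ι (i - 1) < μ) ∧ (i = k - 1 ∨ μ < ι (i + 1))) := fun i μ => Iff.rfl
  -- insertion on the left of the chain
  have hleft : ∀ μ, μ < ι 0 → sel n u f μ = sel n u f (ι 0) := by
    intro μ hμ
    by_contra hne
    set G : ℕ → ℝ := fun j => if j = 0 then μ else ι (j - 1) with hG
    have hG0 : G 0 = μ := by simp [hG]
    have hGs : ∀ j, j ≠ 0 → G j = ι (j - 1) := by
      intro j hj; simp [hG, hj]
    have hch : IsChainF n u f (k + 1) G := by
      constructor
      · intro i j hij hj
        by_cases hi0 : i = 0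
        · subst hi0
          rw [hG0, hGs j (by omega)]
          exact lt_of_lt_of_le hμ (hmono 0 (j - 1) (by omega) (by omega))
        · rw [hGs i hi0, hGs j (by omega)]
          exact hι.1 (i - 1) (j - 1) (by omega) (by omega)
      · intro i hi
        by_cases hi0 : i = 0
        · subst hi0
          rw [hG0, hGs 1 (by omega)]
          exact hne
        · rw [hGs i hi0, hGs (i + 1) (by omega)]
          have := hι.2 (i - 1) (by omega)
          rw [show i - 1 + 1 = i from by omega] at this
          rw [show i + 1 - 1 = i from by omega]
          exact this
    exact absurd (hkmax _ _ hch) (by omega)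
  -- insertion on the right of the chain
  have hright : ∀ μ, ι (k - 1) < μ → sel n u f μ = sel n u f (ι (k - 1)) := by
    intro μ hμ
    by_contra hne
    set G : ℕ → ℝ := fun j => if j < k then ι j else μ with hG
    have hGo : ∀ j, j < k → G j = ι j := by intro j hj; simp [hG, hj]
    have hGk : G k = μ := by simp [hG]
    have hch : IsChainF n u f (k + 1) G := by
      constructor
      · intro i j hij hj
        by_cases hjk : j < k
        · rw [hGo i (by omega), hGo j hjk]
          exact hι.1 i j hij hjk
        · rw [hGo i (by omega), show j = k from by omega, hGk]
          exact lt_of_le_of_lt (hmono i (k - 1) (by omega) (by omega)) hμ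
      · intro i hi
        by_cases hik : i + 1 < k
        · rw [hGo i (by omega), hGo (i + 1) hik]
          exact hι.2 i hik
        · rw [hGo i (by omega), show i + 1 = k from by omega, hGk,
            show i = k - 1 from by omega]
          exact Ne.symm hne
    exact absurd (hkmax _ _ hch) (by omega)
  -- insertion in the middle
  have hmid : ∀ i μ, i + 1 < k → ι i < μ → μ < ι (i + 1) →
      sel n u f μ = sel n u f (ι i) ∨ sel n u f μ = sel n u f (ι (i + 1)) := by
    intro i μ hik hl hr
    by_contra hne
    push_neg at hne
    obtain ⟨hne1, hne2⟩ := hne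
    set G : ℕ → ℝ := fun j => if j ≤ i then ι j else if j = i + 1 then μ else ι (j - 1)
      with hG
    have hGo : ∀ j, j ≤ i → G j = ι j := by intro j hj; simp [hG, hj]
    have hGm : G (i + 1) = μ := by
      rw [hG]; simp only []
      rw [if_neg (by omega)]
      simp
    have hGo2 : ∀ j, i + 1 < j → G j = ι (j - 1) := by
      intro j hj
      rw [hG]; simp only []
      rw [if_neg (by omega), if_neg (by omega)]
    have hch : IsChainF n u f (k + 1) G := by
      constructor
      · intro p q hpq hq
        by_cases hqi : q ≤ i
        · rw [hGo p (by omega), hGo q hqi]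
          exact hι.1 p q hpq (by omega)
        · by_cases hqe : q = i + 1
          · subst hqe
            rw [hGo p (by omega), hGm]
            exact lt_of_le_of_lt (hmono p i (by omega) (by omega)) hl
          · have hq2 : i + 2 ≤ q := by omega
            rw [hGo2 q (by omega)]
            by_cases hpi : p ≤ i
            · rw [hGo p hpi]
              exact hι.1 p (q - 1) (by omega) (by omega)
            · by_cases hpe : p = i + 1
              · subst hpe
                rw [hGm]
                exact lt_of_lt_of_le hr (hmono (i + 1) (q - 1) (by omega) (by omega))
              · rw [hGo2 p (by omega)]
                exact hι.1 (p - 1) (q - 1) (by omega) (by omega)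
      · intro j hj
        by_cases h1 : j + 1 ≤ i
        · rw [hGo j (by omega), hGo (j + 1) h1]
          exact hι.2 j (by omega)
        · by_cases h2 : j = i
          · subst h2
            rw [hGo j le_rfl, hGm]
            exact Ne.symm hne1
          · by_cases h3 : j = i + 1
            · subst h3
              rw [hGm, hGo2 (i + 2) (by omega), show i + 2 - 1 = i + 1 from by omega]
              exact hne2
            · rw [hGo2 j (by omega), hGo2 (j + 1) (by omega),
                show j + 1 - 1 = j from by omega]
              have := hι.2 (j - 1) (by omega)
              rw [show j - 1 + 1 = j from by omega] at this
              exact this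
    exact absurd (hkmax _ _ hch) (by omega)
  -- double insertion: constancy of the selector between two points of a piece
  have hins : ∀ i, i < k → ∀ x z y : ℝ, x ∈ I i → y ∈ I i → x < z → z < y →
      sel n u f z = sel n u f (ι i) := by
    intro i hik x z y hx hy hxz hzy
    by_contra hne
    obtain ⟨hx1, hx2, hx3⟩ := (hmemI i x).mp hx
    obtain ⟨hy1, hy2, hy3⟩ := (hmemI i y).mp hy
    have hx2' : ∀ p', p' < i → ι p' < x := by
      intro p' hp'
      have h2 : ι (i - 1) < x := hx2.resolve_left (by omega)
      exact lt_of_le_of_lt (hmono p' (i - 1) (by omega) (by omega)) h2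
    have hy3' : ∀ q', i + 1 ≤ q' → q' < k → y < ι q' := by
      intro q' h1 h2
      have h3 : y < ι (i + 1) := hy3.resolve_left (by omega)
      exact lt_of_lt_of_le h3 (hmono (i + 1) q' h1 h2)
    set G : ℕ → ℝ := fun j => if j < i then ι j else if j = i then x
      else if j = i + 1 then z else if j = i + 2 then y else ι (j - 2) with hG
    have hGo : ∀ j, j < i → G j = ι j := by intro j hj; simp [hG, hj]
    have hGx : G i = x := by
      rw [hG]; simp only []
      rw [if_neg (by omega)]
      simp
    have hGz : G (i + 1) = z := by
      rw [hG]; simp only []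
      rw [if_neg (by omega), if_neg (by omega)]
      simp
    have hGy : G (i + 2) = y := by
      rw [hG]; simp only []
      rw [if_neg (by omega), if_neg (by omega), if_neg (by omega)]
      simp
    have hGo2 : ∀ j, i + 2 < j → G j = ι (j - 2) := by
      intro j hj
      rw [hG]; simp only []
      rw [if_neg (by omega), if_neg (by omega), if_neg (by omega), if_neg (by omega)]
    have hch : IsChainF n u f (k + 2) G := by
      constructor
      · intro p q hpq hq
        by_cases hq1 : q < i
        · rw [hGo p (by omega), hGo q hq1]
          exact hι.1 p q hpq (by omega)
        · by_cases hq2 : q = i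
          · subst hq2
            rw [hGo p (by omega), hGx]
            exact hx2' p (by omega)
          · by_cases hq3 : q = i + 1
            · subst hq3
              rw [hGz]
              by_cases hp1 : p < i
              · rw [hGo p hp1]
                exact lt_trans (hx2' p hp1) hxz
              · rw [show p = i from by omega, hGx]
                exact hxz
            · by_cases hq4 : q = i + 2
              · subst hq4
                rw [hGy]
                by_cases hp1 : p < i
                · rw [hGo p hp1]
                  exact lt_trans (hx2' p hp1) (lt_trans hxz hzy)
                · by_cases hp2 : p = i
                  · subst hp2
                    rw [hGx]
                    exact lt_trans hxz hzy
                  · rw [show p = i + 1 from by omega, hGz]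
                    exact hzy
              · have hq5 : i + 2 < q := by omega
                rw [hGo2 q hq5]
                have hyq : y < ι (q - 2) := hy3' (q - 2) (by omega) (by omega)
                by_cases hp1 : p < i
                · rw [hGo p hp1]
                  exact hι.1 p (q - 2) (by omega) (by omega)
                · by_cases hp2 : p = i
                  · subst hp2
                    rw [hGx]
                    exact lt_trans hxz (lt_trans hzy hyq)
                  · by_cases hp3 : p = i + 1
                    · subst hp3
                      rw [hGz]
                      exact lt_trans hzy hyq
                    · by_cases hp4 : p = i + 2
                      · subst hp4
                        rw [hGy]
                        exact hyq
                      · rw [hGo2 p (by omega)]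
                        exact hι.1 (p - 2) (q - 2) (by omega) (by omega)
      · intro j hj
        by_cases h1 : j + 1 < i
        · rw [hGo j (by omega), hGo (j + 1) h1]
          exact hι.2 j (by omega)
        · by_cases h2 : j + 1 = i
          · rw [hGo j (by omega), show j + 1 = i from h2, hGx, hx1, ← h2]
            exact hι.2 j (by omega)
          · by_cases h3 : j = i
            · subst h3
              rw [hGx, hGz, hx1]
              exact Ne.symm hne
            · by_cases h4 : j = i + 1
              · subst h4
                rw [hGz, show i + 1 + 1 = i + 2 from rfl, hGy, hy1]
                exact hne
              · by_cases h5 : j = i + 2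
                · subst h5
                  rw [hGy, hGo2 (i + 2 + 1) (by omega),
                    show i + 2 + 1 - 2 = i + 1 from by omega, hy1]
                  exact hι.2 i (by omega)
                · rw [hGo2 j (by omega), hGo2 (j + 1) (by omega),
                    show j + 1 - 2 = j - 1 from by omega]
                  have := hι.2 (j - 2) (by omega)
                  rw [show j - 2 + 1 = j - 1 from by omega] at this
                  exact this
    exact absurd (hkmax _ _ hch) (by omega)
  -- covering
  have hcov : ∀ μ : ℝ, ∃ i, i < k ∧ μ ∈ I i := by
    intro μ
    rcases lt_trichotomy μ (ι 0) with h | h | h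
    · refine ⟨0, by omega, (hmemI 0 μ).mpr ⟨hleft μ h, Or.inl rfl, ?_⟩⟩
      by_cases hk1' : k = 1
      · exact Or.inl (by omega)
      · exact Or.inr (lt_trans h (hι.1 0 1 (by omega) (by omega)))
    · refine ⟨0, by omega, (hmemI 0 μ).mpr ⟨by rw [h], Or.inl rfl, ?_⟩⟩
      by_cases hk1' : k = 1
      · exact Or.inl (by omega)
      · exact Or.inr (by rw [h]; exact hι.1 0 1 (by omega) (by omega))
    · by_cases hR : ι (k - 1) < μ
      · refine ⟨k - 1, by omega, (hmemI (k - 1) μ).mpr ⟨hright μ hR, ?_, Or.inl rfl⟩⟩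
        by_cases hk1' : k = 1
        · exact Or.inl (by omega)
        · exact Or.inr (lt_trans (hι.1 (k - 1 - 1) (k - 1) (by omega) (by omega)) hR)
      · have hk2 : 2 ≤ k := by
          by_contra h'
          have hke : k = 1 := by omega
          rw [hke] at hR
          exact hR h
        set i0 := Nat.findGreatest (fun i => ι i < μ) (k - 1) with hi0
        have hspec : ι i0 < μ := Nat.findGreatest_spec (P := fun i => ι i < μ) (by omega : 0 ≤ k - 1) h
        have hle : i0 ≤ k - 1 := Nat.findGreatest_le _
        have hi0lt : i0 < k - 1 := by
          rcases lt_or_eq_of_le hle with h' | h'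
          · exact h'
          · rw [h'] at hspec
            exact absurd hspec hR
        have hnext : μ ≤ ι (i0 + 1) := by
          by_contra h'
          push_neg at h'
          exact Nat.findGreatest_is_greatest (P := fun i => ι i < μ) (k := i0 + 1) (n := k - 1) (by omega) (by omega) h'
        rcases eq_or_lt_of_le hnext with he | hlt
        · refine ⟨i0 + 1, by omega, (hmemI (i0 + 1) μ).mpr ⟨by rw [he], ?_, ?_⟩⟩
          · exact Or.inr (by rw [show i0 + 1 - 1 = i0 from by omega]; exact hspec)
          · by_cases h' : i0 + 1 = k - 1
            · exact Or.inl h'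
            · exact Or.inr (by rw [he]; exact hι.1 (i0 + 1) (i0 + 2) (by omega) (by omega))
        · rcases hmid i0 μ (by omega) hspec hlt with hs | hs
          · refine ⟨i0, by omega, (hmemI i0 μ).mpr ⟨hs, ?_, Or.inr hlt⟩⟩
            by_cases h' : i0 = 0
            · exact Or.inl h'
            · exact Or.inr (lt_trans (hι.1 (i0 - 1) i0 (by omega) (by omega)) hspec)
          · refine ⟨i0 + 1, by omega, (hmemI (i0 + 1) μ).mpr ⟨hs, ?_, ?_⟩⟩
            · exact Or.inr (by rw [show i0 + 1 - 1 = i0 from by omega]; exact hspec)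
            · by_cases h' : i0 + 1 = k - 1
              · exact Or.inl h'
              · exact Or.inr (lt_trans hlt (hι.1 (i0 + 1) (i0 + 2) (by omega) (by omega)))
  -- pairwise disjointness of distinct pieces
  have hdisj : ∀ i j, i < j → j < k → Disjoint (I i) (I j) := by
    intro i j hij hjk
    rw [Set.disjoint_left]
    intro μ hμi hμj
    obtain ⟨hi1, hi2, hi3⟩ := (hmemI i μ).mp hμi
    obtain ⟨hj1, hj2, hj3⟩ := (hmemI j μ).mp hμj
    by_cases hcase : j = i + 1
    · exact hι.2 i (by omega) (by rw [← hi1, ← hcase, hj1])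
    · have hij2 : i + 2 ≤ j := by omega
      have h3 : μ < ι (i + 1) := hi3.resolve_left (by omega)
      have h2 : ι (j - 1) < μ := hj2.resolve_left (by omega)
      have := hmono (i + 1) (j - 1) (by omega) (by omega)
      linarith
  refine ⟨(Finset.range k).image I, ?_, ?_, ?_, ?_, ?_⟩
  · calc ((Finset.range k).image I).card ≤ (Finset.range k).card := Finset.card_image_le
    _ = k := Finset.card_range k
    _ ≤ 2 * n - 1 := hkb
  · intro J hJ
    obtain ⟨i, hik, rfl⟩ := Finset.mem_image.mp hJ
    rw [Finset.mem_range] at hik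
    rw [convex_iff_ordConnected]
    rw [Set.ordConnected_iff]
    intro x hx y hy hxy
    intro z hz
    rcases eq_or_lt_of_le hz.1 with rfl | h1
    · exact hx
    rcases eq_or_lt_of_le hz.2 with rfl | h2
    · exact hy
    obtain ⟨hx1, hx2, hx3⟩ := (hmemI i x).mp hx
    obtain ⟨hy1, hy2, hy3⟩ := (hmemI i y).mp hy
    refine (hmemI i z).mpr ⟨hins i hik x z y hx hy h1 h2, ?_, ?_⟩
    · rcases hx2 with h | h
      · exact Or.inl h
      · exact Or.inr (lt_of_lt_of_le h hz.1)
    · rcases hy3 with h | h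
      · exact Or.inl h
      · exact Or.inr (lt_of_le_of_lt hz.2 h)
  · rintro s hs t ht hne
    rw [Finset.mem_coe, Finset.mem_image] at hs ht
    obtain ⟨i, hik, rfl⟩ := hs
    obtain ⟨j, hjk, rfl⟩ := ht
    rw [Finset.mem_range] at hik hjk
    rcases lt_trichotomy i j with h | h | h
    · exact hdisj i j h hjk
    · exact absurd (congrArg I h ▸ rfl) hne
    · exact (hdisj j i h hik).symm
  · rw [Set.sUnion_eq_univ_iff]
    intro μ
    obtain ⟨i, hik, hμ⟩ := hcov μ
    exact ⟨I i, Finset.mem_coe.mpr (Finset.mem_image_of_mem I (Finset.mem_range.mpr hik)), hμ⟩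
  · intro J hJ
    obtain ⟨i, hik, rfl⟩ := Finset.mem_image.mp hJ
    have hopt := sel_opt n u f hn (ι i)
    obtain ⟨h1, h2⟩ := Finset.mem_Icc.mp hopt.1
    refine ⟨sel n u f (ι i), h1, h2, ?_⟩
    intro μ hμ
    have hselμ : sel n u f μ = sel n u f (ι i) := ((hmemI i μ).mp hμ).1
    have hoptμ := sel_opt n u f hn μ
    rw [hselμ] at hoptμ
    apply IsLeast.csInf_eq
    constructor
    · exact ⟨sel n u f (ι i), h1, h2, rfl⟩
    · rintro x ⟨s, hs1, hs2, rfl⟩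
      exact hoptμ.2 s (Finset.mem_Icc.mpr ⟨hs1, hs2⟩)
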